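/- arXiv:0810.0295 — 2 statements merged into one kernel-verified Lean document; each statement's English description precedes it below -/
import Mathlib

section
/- Let \eta be the linear map on Z\langle a,b\rangle with \eta(b^m a^k) = 2 (a-b)^{m+k} and \eta(v) = 0 for ab-monomials not of the form b^m a^k. Then for any graded poset P, \eta(\Psi(P)) = Z(P) \cdot (a-b)^{\rho(P)-1}, where Z(P) = \sum_{x \in P} (-1)^{\rho(x)} \mu(\hat{0},x). -/
open Finset

/-- The ring `ℤ⟨a,b⟩` of noncommutative polynomials in the variables `a` and `b`,
realized as the monoid algebra of the free monoid on two letters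
(`false` encodes the letter `a` and `true` the letter `b`). -/
abbrev AB : Type := MonoidAlgebra ℤ (FreeMonoid Bool)

/-- The variable `a`. -/
noncomputable def aV : AB := MonoidAlgebra.single (FreeMonoid.ofList [false]) 1

/-- The variable `b`. -/
noncomputable def bV : AB := MonoidAlgebra.single (FreeMonoid.ofList [true]) 1

/-- The `ab`-monomial `u_S` of degree `n`, with `b` in the positions of `S`. -/
def word (n : ℕ) (S : Finset ℕ) : FreeMonoid Bool :=
  FreeMonoid.ofList (List.ofFn fun i : Fin n => decide ((i : ℕ) + 1 ∈ S))

/-- The flag `f`-vector entry `f_S`. -/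
noncomputable def flagF (P : Type*) [PartialOrder P] (ρ : P → ℕ) (S : Finset ℕ) : ℤ :=
  ({c : Finset P | IsChain (· ≤ ·) (↑c : Set P) ∧ c.image ρ = S} : Set (Finset P)).ncard

/-- The flag `h`-vector entry `h_S`. -/
noncomputable def flagH (P : Type*) [PartialOrder P] (ρ : P → ℕ) (S : Finset ℕ) : ℤ :=
  ∑ T ∈ S.powerset, (-1) ^ (S.card - T.card) * flagF P ρ T

/-- The `ab`-index `Ψ(P) = ∑_S h_S u_S` of a poset `P` of rank `n+1` with rank
function `ρ` (the elements of ranks `1,…,n` are the proper part of `P`). -/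
noncomputable def Psi (P : Type*) [PartialOrder P] (ρ : P → ℕ) (n : ℕ) : AB :=
  ∑ S ∈ (Finset.Icc 1 n).powerset, MonoidAlgebra.single (word n S) (flagH P ρ S)


open scoped Classical

/-- Extend a function on `ab`-monomials linearly to all of `ℤ⟨a,b⟩`. -/
noncomputable def extendMon (g : List Bool → AB) : AB → AB := fun w =>
  w.coeff.sum fun m c => c • g (FreeMonoid.toList m)

/-- The Möbius function of a finite poset. -/
noncomputable def muP (P : Type*) [PartialOrder P] [Fintype P] (x y : P) : ℤ :=
  letI := Classical.decEq P
  letI : DecidableRel (α := P) (· < ·) := Classical.decRel _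
  letI : DecidableRel (α := P) (· ≤ ·) := Classical.decRel _
  letI := Fintype.toLocallyFiniteOrder (α := P)
  IncidenceAlgebra.mu ℤ x y

/-- The map `η`, sending `b^m a^k ↦ 2(a-b)^{m+k}` and all other monomials to `0`. -/
noncomputable def etaMon (l : List Bool) : AB :=
  if ∃ m k : ℕ, l = List.replicate m true ++ List.replicate k false then
    2 * (aV - bV) ^ l.length
  else 0

lemma extendMon_single (g : List Bool → AB) (m : FreeMonoid Bool) (c : ℤ) :
    extendMon g (MonoidAlgebra.single m c) = c • g (FreeMonoid.toList m) :=
  Finsupp.sum_single_index (by simp)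

lemma extendMon_sum {ι : Type*} (g : List Bool → AB) (s : Finset ι) (f : ι → AB) :
    extendMon g (∑ i ∈ s, f i) = ∑ i ∈ s, extendMon g (f i) := by
  classical
  induction s using Finset.induction_on with
  | empty => simp [extendMon]
  | insert _ _ h ih =>
    rw [Finset.sum_insert h, Finset.sum_insert h, ← ih]
    exact Finsupp.sum_add_index' (by simp) (fun m c1 c2 => add_smul c1 c2 _)

lemma word_repl {n m : ℕ} (hm : m ≤ n) :
    FreeMonoid.toList (word n (Finset.Icc 1 m)) =
      List.replicate m true ++ List.replicate (n - m) false := by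
  show List.ofFn (fun i : Fin n => decide ((i : ℕ) + 1 ∈ Finset.Icc 1 m)) = _
  apply List.ext_getElem
  · simp [Nat.add_sub_cancel' hm]
  · intro i h1 h2
    simp only [List.getElem_ofFn]
    by_cases hi : i < m
    · rw [List.getElem_append_left (by simpa)]
      simp only [List.getElem_replicate, Finset.mem_Icc, decide_eq_true_eq]
      omega
    · rw [List.getElem_append_right (by simpa using hi)]
      simp only [List.getElem_replicate, Finset.mem_Icc]
      simp only [decide_eq_false_iff_not]
      omega

lemma word_initial {n : ℕ} {S : Finset ℕ} (hS : S ⊆ Finset.Icc 1 n)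
    {m k : ℕ}
    (h : FreeMonoid.toList (word n S) = List.replicate m true ++ List.replicate k false) :
    m ≤ n ∧ S = Finset.Icc 1 m := by
  have hL : FreeMonoid.toList (word n S)
      = List.ofFn (fun i : Fin n => decide ((i : ℕ) + 1 ∈ S)) := rfl
  rw [hL] at h
  have hlen : n = m + k := by
    have := congrArg List.length h
    simpa using this
  have hmem : ∀ i : ℕ, i < n → (decide (i + 1 ∈ S) = decide (i < m)) := by
    intro i hi
    have hi2 : i < (List.ofFn (fun i : Fin n => decide ((i : ℕ) + 1 ∈ S))).length := by
      simpa using hi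
    have := List.getElem_of_eq h hi2
    simp only [List.getElem_ofFn] at this
    rw [this]
    by_cases him : i < m
    · rw [List.getElem_append_left (by simpa)]
      simp [him]
    · rw [List.getElem_append_right (by simpa using him)]
      simp [him]
  constructor
  · omega
  · ext j
    simp only [Finset.mem_Icc]
    constructor
    · intro hj
      have hj' := hS hj
      simp only [Finset.mem_Icc] at hj'
      have h1 : j - 1 < n := by omega
      have := hmem (j-1) h1
      rw [show j - 1 + 1 = j by omega] at this
      simp only [decide_eq_decide] at this
      have : j - 1 < m := this.1 hj
      omega
    · rintro ⟨hj1, hj2⟩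
      have h1 : j - 1 < n := by omega
      have := hmem (j-1) h1
      rw [show j - 1 + 1 = j by omega] at this
      simp only [decide_eq_decide] at this
      exact this.2 (by omega)

lemma word_len (n : ℕ) (S : Finset ℕ) : (FreeMonoid.toList (word n S)).length = n := by
  simp [word]

lemma etaMon_word {n : ℕ} {S : Finset ℕ} (hS : S ⊆ Finset.Icc 1 n) :
    etaMon (FreeMonoid.toList (word n S)) =
      if ∃ m, m ≤ n ∧ S = Finset.Icc 1 m then 2 * (aV - bV) ^ n else 0 := by
  rw [etaMon, word_len]
  congr 1
  rw [eq_iff_iff]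
  constructor
  · rintro ⟨m, k, h⟩
    exact ⟨m, word_initial hS h⟩
  · rintro ⟨m, hm, rfl⟩
    exact ⟨m, n - m, word_repl hm⟩

lemma partI (P : Type*) [PartialOrder P] (ρ : P → ℕ) (n : ℕ) :
    extendMon etaMon (Psi P ρ n) =
      (∑ m ∈ Finset.range (n + 1), 2 * flagH P ρ (Finset.Icc 1 m)) • (aV - bV) ^ n := by
  rw [Psi, extendMon_sum]
  have step1 : ∀ S ∈ (Finset.Icc 1 n).powerset,
      extendMon etaMon (MonoidAlgebra.single (word n S) (flagH P ρ S)) =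
        if ∃ m, m ≤ n ∧ S = Finset.Icc 1 m
          then flagH P ρ S • (2 * (aV - bV) ^ n) else 0 := by
    intro S hS
    rw [extendMon_single, etaMon_word (Finset.mem_powerset.1 hS)]
    split <;> simp
  rw [Finset.sum_congr rfl step1, Finset.sum_ite, Finset.sum_const_zero, add_zero]
  have himg : (Finset.Icc 1 n).powerset.filter (fun S => ∃ m, m ≤ n ∧ S = Finset.Icc 1 m)
      = (Finset.range (n+1)).image (fun m => Finset.Icc 1 m) := by
    ext S
    simp only [Finset.mem_filter, Finset.mem_powerset, Finset.mem_image, Finset.mem_range]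
    constructor
    · rintro ⟨-, m, hm, rfl⟩; exact ⟨m, by omega, rfl⟩
    · rintro ⟨m, hm, rfl⟩
      exact ⟨Finset.Icc_subset_Icc le_rfl (by omega), m, by omega, rfl⟩
  rw [himg, Finset.sum_image (fun m₁ h₁ m₂ h₂ h => by
    have := congrArg Finset.card h
    simpa using this)]
  rw [Finset.sum_smul]
  refine Finset.sum_congr rfl fun m _ => ?_
  rw [zsmul_eq_mul, zsmul_eq_mul]
  push_cast
  rw [← mul_assoc, Int.cast_comm]

section Chains
variable {P : Type*} [PartialOrder P]

noncomputable def chainsIn (A : Finset P) : Finset (Finset P) :=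
  A.powerset.filter (fun c => IsChain (· ≤ ·) (↑c : Set P))

lemma mem_chainsIn {A c : Finset P} :
    c ∈ chainsIn A ↔ c ⊆ A ∧ IsChain (· ≤ ·) (↑c : Set P) := by
  simp [chainsIn]

lemma empty_mem_chainsIn {A : Finset P} : ∅ ∈ chainsIn A := by
  simp [mem_chainsIn]

lemma chain_exists_top {c : Finset P} (hc : IsChain (· ≤ ·) (↑c : Set P))
    (hne : c.Nonempty) : ∃ x ∈ c, ∀ y ∈ c, y ≤ x := by
  obtain ⟨m, hm, hmax⟩ := Finset.exists_maximal hne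
  refine ⟨m, hm, fun y hy => ?_⟩
  rcases eq_or_ne y m with rfl | hne'
  · exact le_rfl
  · rcases hc hy hm hne' with h | h
    · exact h
    · exact absurd (lt_of_le_of_ne h (Ne.symm hne')) (not_lt_of_ge (hmax hy h))

noncomputable def topOf [OrderBot P] (c : Finset P) : P :=
  if h : ∃ x ∈ c, ∀ y ∈ c, y ≤ x then h.choose else ⊥

variable [OrderBot P]

lemma topOf_spec {c : Finset P} (hc : IsChain (· ≤ ·) (↑c : Set P)) (hne : c.Nonempty) :
    topOf c ∈ c ∧ ∀ y ∈ c, y ≤ topOf c := by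
  have h := chain_exists_top hc hne
  rw [topOf, dif_pos h]
  exact ⟨h.choose_spec.1, h.choose_spec.2⟩

lemma topOf_eq {c : Finset P} {z : P} (hz : z ∈ c) (hmax : ∀ y ∈ c, y ≤ z) :
    topOf c = z := by
  have h : ∃ x ∈ c, ∀ y ∈ c, y ≤ x := ⟨z, hz, hmax⟩
  rw [topOf, dif_pos h]
  exact le_antisymm (hmax _ h.choose_spec.1) (h.choose_spec.2 z hz)

lemma peel (A : Finset P) (F : Finset P → ℤ) :
    ∑ c ∈ (chainsIn A).filter (fun c => c.Nonempty), F c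
      = ∑ z ∈ A, ∑ c ∈ chainsIn (A.filter (· < z)), F (insert z c) := by
  rw [Finset.sum_sigma']
  refine Finset.sum_bij' (i := fun d _ => (⟨topOf d, d.erase (topOf d)⟩ : Σ _ : P, Finset P))
    (j := fun p _ => insert p.1 p.2) ?_ ?_ ?_ ?_ ?_
  · intro d hd
    rw [Finset.mem_filter, mem_chainsIn] at hd
    obtain ⟨⟨hsub, hch⟩, hne⟩ := hd
    obtain ⟨hmem, hmax⟩ := topOf_spec hch hne
    rw [Finset.mem_sigma]
    refine ⟨hsub hmem, ?_⟩
    rw [mem_chainsIn]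
    constructor
    · intro y hy
      rw [Finset.mem_erase] at hy
      rw [Finset.mem_filter]
      exact ⟨hsub hy.2, lt_of_le_of_ne (hmax y hy.2) hy.1⟩
    · exact hch.mono (by simpa using Finset.erase_subset _ _)
  · intro p hp
    rw [Finset.mem_sigma, mem_chainsIn] at hp
    obtain ⟨hz, hsub, hch⟩ := hp
    have hlt : ∀ y ∈ p.2, y < p.1 := fun y hy => (Finset.mem_filter.1 (hsub hy)).2
    rw [Finset.mem_filter, mem_chainsIn]
    refine ⟨⟨?_, ?_⟩, Finset.insert_nonempty _ _⟩
    · intro y hy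
      rcases Finset.mem_insert.1 hy with rfl | hy
      · exact hz
      · exact (Finset.mem_filter.1 (hsub hy)).1
    · rw [Finset.coe_insert]
      exact hch.insert (fun y hy _ => Or.inr (hlt y hy).le)
  · intro d hd
    rw [Finset.mem_filter, mem_chainsIn] at hd
    exact Finset.insert_erase (topOf_spec hd.1.2 hd.2).1
  · intro p hp
    rw [Finset.mem_sigma, mem_chainsIn] at hp
    obtain ⟨hz, hsub, hch⟩ := hp
    have hlt : ∀ y ∈ p.2, y < p.1 := fun y hy => (Finset.mem_filter.1 (hsub hy)).2
    obtain ⟨z, c⟩ := p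
    dsimp only at *
    have htop : topOf (insert z c) = z := by
      refine topOf_eq (Finset.mem_insert_self _ _) fun y hy => ?_
      rcases Finset.mem_insert.1 hy with rfl | hy
      · exact le_rfl
      · exact (hlt y hy).le
    have hznc : z ∉ c := fun h => absurd (hlt z h) (lt_irrefl z)
    rw [htop, Finset.erase_insert hznc]
  · intro d hd
    rw [Finset.mem_filter, mem_chainsIn] at hd
    rw [Finset.insert_erase (topOf_spec hd.1.2 hd.2).1]

lemma sum_chainsIn_split (A : Finset P) (F : Finset P → ℤ) :
    ∑ c ∈ chainsIn A, F c = F ∅ + ∑ c ∈ (chainsIn A).filter (fun c => c.Nonempty), F c := by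
  rw [← Finset.sum_filter_add_sum_filter_not (chainsIn A) (fun c => c.Nonempty)]
  rw [add_comm]
  congr 1
  have : (chainsIn A).filter (fun c => ¬ c.Nonempty) = {∅} := by
    ext c
    simp only [Finset.mem_filter, Finset.mem_singleton, Finset.not_nonempty_iff_eq_empty]
    exact ⟨fun h => h.2, fun h => ⟨h ▸ empty_mem_chainsIn, h⟩⟩
  rw [this, Finset.sum_singleton]

end Chains
lemma muP_apply {P : Type*} [Fintype P] [PartialOrder P] (x y : P) :
    muP P x y = if x = y then 1
      else -∑ z ∈ Finset.univ.filter (fun z => x ≤ z ∧ z < y), muP P x z := by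
  letI := Classical.decEq P
  letI : DecidableRel (α := P) (· < ·) := Classical.decRel _
  letI : DecidableRel (α := P) (· ≤ ·) := Classical.decRel _
  letI := Fintype.toLocallyFiniteOrder (α := P)
  have h : ∀ a b : P, muP P a b = IncidenceAlgebra.mu ℤ a b := fun a b => rfl
  rw [h, IncidenceAlgebra.mu_apply]
  by_cases hxy : x = y
  · rw [if_pos hxy, if_pos hxy]
  · rw [if_neg hxy, if_neg hxy]
    congr 1
    refine Finset.sum_congr ?_ fun z _ => (h x z).symm
    ext z
    simp [Finset.mem_Ico]

lemma hall {P : Type*} [Fintype P] [PartialOrder P] [OrderBot P] (ρ : P → ℕ)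
    (hbot : ρ ⊥ = 0) (hstrict : ∀ x y : P, x < y → ρ x < ρ y) :
    ∀ x : P, x ≠ ⊥ →
      muP P ⊥ x = -∑ c ∈ chainsIn (Finset.univ.filter fun y => ⊥ < y ∧ y < x),
          (-1 : ℤ) ^ c.card := by
  suffices H : ∀ N : ℕ, ∀ x : P, ρ x ≤ N → x ≠ ⊥ →
      muP P ⊥ x = -∑ c ∈ chainsIn (Finset.univ.filter fun y => ⊥ < y ∧ y < x),
        (-1 : ℤ) ^ c.card by
    exact fun x => H (ρ x) x le_rfl
  intro N
  induction N with
  | zero =>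
    intro x hx hne
    have : ⊥ < x := Ne.bot_lt hne
    have := hstrict _ _ this
    omega
  | succ N ih =>
    intro x hx hne
    have hbx : ⊥ < x := Ne.bot_lt hne
    -- LHS
    rw [muP_apply, if_neg (fun h => hne h.symm)]
    have hsplit : Finset.univ.filter (fun z => ⊥ ≤ z ∧ z < x)
        = insert ⊥ (Finset.univ.filter fun z => ⊥ < z ∧ z < x) := by
      ext z
      simp only [Finset.mem_filter, Finset.mem_univ, true_and, Finset.mem_insert]
      constructor
      · rintro ⟨-, hzx⟩
        rcases eq_or_ne z ⊥ with rfl | hz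
        · exact Or.inl rfl
        · exact Or.inr ⟨Ne.bot_lt hz, hzx⟩
      · rintro (rfl | ⟨h1, h2⟩)
        · exact ⟨le_rfl, hbx⟩
        · exact ⟨bot_le, h2⟩
    rw [hsplit, Finset.sum_insert (by simp)]
    have hmu_bot : muP P ⊥ (⊥ : P) = 1 := by rw [muP_apply, if_pos rfl]
    rw [hmu_bot]
    have hIH : ∀ z ∈ Finset.univ.filter (fun z : P => ⊥ < z ∧ z < x),
        muP P ⊥ z = -∑ c ∈ chainsIn (Finset.univ.filter fun y => ⊥ < y ∧ y < z),
          (-1 : ℤ) ^ c.card := by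
      intro z hz
      rw [Finset.mem_filter] at hz
      have : ρ z < ρ x := hstrict _ _ hz.2.2
      exact ih z (by omega) (ne_bot_of_gt hz.2.1)
    rw [Finset.sum_congr rfl hIH]
    -- RHS
    rw [sum_chainsIn_split, peel]
    have hinner : ∀ z ∈ Finset.univ.filter (fun y : P => ⊥ < y ∧ y < x),
        ∑ c ∈ chainsIn ((Finset.univ.filter fun y : P => ⊥ < y ∧ y < x).filter (· < z)),
            (-1 : ℤ) ^ (insert z c).card
          = -∑ c ∈ chainsIn (Finset.univ.filter fun y => ⊥ < y ∧ y < z),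
              (-1 : ℤ) ^ c.card := by
      intro z hz
      rw [Finset.mem_filter] at hz
      have hA : (Finset.univ.filter fun y : P => ⊥ < y ∧ y < x).filter (· < z)
          = Finset.univ.filter fun y => ⊥ < y ∧ y < z := by
        ext y
        simp only [Finset.mem_filter, Finset.mem_univ, true_and]
        exact ⟨fun h => ⟨h.1.1, h.2⟩, fun h => ⟨⟨h.1, h.2.trans hz.2.2⟩, h.2⟩⟩
      rw [hA, ← Finset.sum_neg_distrib]
      refine Finset.sum_congr rfl fun c hc => ?_
      rw [mem_chainsIn] at hc
      have hzc : z ∉ c := by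
        intro h
        exact absurd (Finset.mem_filter.1 (hc.1 h)).2.2 (lt_irrefl z)
      rw [Finset.card_insert_of_notMem hzc, pow_succ]
      ring
    rw [Finset.sum_congr rfl hinner]
    norm_num

noncomputable def t0 (T : Finset ℕ) : ℕ := if h : T.Nonempty then T.max' h else 0

noncomputable def FF {P : Type*} [PartialOrder P] [OrderBot P] (ρ : P → ℕ) (d : Finset P) : ℤ :=
  if h : d.Nonempty then (-1) ^ (ρ (topOf d) + d.card) else 0

section Z
variable {P : Type*} [Fintype P] [PartialOrder P] [BoundedOrder P] (ρ : P → ℕ)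

lemma Z1 (hbot : ρ ⊥ = 0) (hstrict : ∀ x y : P, x < y → ρ x < ρ y) :
    ∑ x : P, (-1 : ℤ) ^ (ρ x) * muP P ⊥ x
      = 1 + ∑ d ∈ chainsIn (Finset.univ.filter fun y : P => ⊥ < y), FF ρ d := by
  rw [← Finset.sum_filter_add_sum_filter_not Finset.univ (fun x : P => x = ⊥)]
  have h1 : Finset.univ.filter (fun x : P => x = ⊥) = {⊥} := by ext x; simp
  have h2 : Finset.univ.filter (fun x : P => ¬ x = ⊥) = Finset.univ.filter (fun y : P => ⊥ < y) := by
    ext x; simp [bot_lt_iff_ne_bot]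
  rw [h1, h2, Finset.sum_singleton, hbot, muP_apply, if_pos rfl, pow_zero, mul_one]
  congr 1
  have hx : ∀ x ∈ Finset.univ.filter (fun y : P => ⊥ < y),
      (-1 : ℤ) ^ (ρ x) * muP P ⊥ x
        = ∑ c ∈ chainsIn ((Finset.univ.filter fun y : P => ⊥ < y).filter (· < x)),
            FF ρ (insert x c) := by
    intro x hx
    rw [Finset.mem_filter] at hx
    rw [hall ρ hbot hstrict x (ne_bot_of_gt hx.2)]
    have hAA : Finset.univ.filter (fun y : P => ⊥ < y ∧ y < x)
        = (Finset.univ.filter fun y : P => ⊥ < y).filter (· < x) := by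
      ext y; simp [and_assoc]
    rw [← hAA, mul_neg, Finset.mul_sum, ← Finset.sum_neg_distrib]
    refine Finset.sum_congr rfl fun c hc => ?_
    rw [mem_chainsIn] at hc
    have hlt : ∀ y ∈ c, y < x := fun y hy => (Finset.mem_filter.1 (hc.1 hy)).2.2
    have hxc : x ∉ c := fun h => absurd (hlt x h) (lt_irrefl x)
    have htop : topOf (insert x c) = x := by
      refine topOf_eq (Finset.mem_insert_self _ _) fun y hy => ?_
      rcases Finset.mem_insert.1 hy with rfl | hy
      · exact le_rfl
      · exact (hlt y hy).le
    rw [FF, dif_pos (Finset.insert_nonempty _ _), htop,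
      Finset.card_insert_of_notMem hxc, pow_add, pow_add, pow_one]
    ring
  rw [Finset.sum_congr rfl hx, ← peel, sum_chainsIn_split]
  simp [FF]

lemma Z2 (hbot : ρ ⊥ = 0) {n : ℕ} (htop : ρ ⊤ = n + 1)
    (hstrict : ∀ x y : P, x < y → ρ x < ρ y) :
    ∑ d ∈ chainsIn (Finset.univ.filter fun y : P => ⊥ < y), FF ρ d
      = ∑ d ∈ chainsIn (Finset.univ.filter fun y : P => ⊥ < y ∧ y < ⊤), FF ρ d
        + ∑ e ∈ chainsIn (Finset.univ.filter fun y : P => ⊥ < y ∧ y < ⊤),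
            (-1 : ℤ) ^ (n + e.card) := by
  have hbt : (⊥ : P) ≠ ⊤ := fun h => by
    have := htop; rw [← h, hbot] at this; omega
  rw [← Finset.sum_filter_add_sum_filter_not
    (chainsIn (Finset.univ.filter fun y : P => ⊥ < y)) (fun d => ⊤ ∈ d)]
  rw [add_comm]
  congr 1
  · -- chains not containing ⊤
    refine Finset.sum_congr ?_ fun d _ => rfl
    ext d
    simp only [Finset.mem_filter, mem_chainsIn]
    constructor
    · rintro ⟨⟨hsub, hch⟩, htopn⟩
      refine ⟨fun y hy => ?_, hch⟩
      have h1 := Finset.mem_filter.1 (hsub hy)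
      refine Finset.mem_filter.2 ⟨Finset.mem_univ _, h1.2, ?_⟩
      exact lt_of_le_of_ne le_top (fun h => htopn (h ▸ hy))
    · rintro ⟨hsub, hch⟩
      refine ⟨⟨fun y hy => ?_, hch⟩, fun h => ?_⟩
      · have h1 := Finset.mem_filter.1 (hsub hy)
        exact Finset.mem_filter.2 ⟨Finset.mem_univ _, h1.2.1⟩
      · exact absurd (Finset.mem_filter.1 (hsub h)).2.2 (lt_irrefl ⊤)
  · -- chains containing ⊤
    refine Finset.sum_bij' (i := fun d _ => d.erase ⊤) (j := fun e _ => insert ⊤ e)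
      ?_ ?_ ?_ ?_ ?_
    · intro d hd
      rw [Finset.mem_filter, mem_chainsIn] at hd
      obtain ⟨⟨hsub, hch⟩, htopd⟩ := hd
      rw [mem_chainsIn]
      constructor
      · intro y hy
        rw [Finset.mem_erase] at hy
        have h1 := Finset.mem_filter.1 (hsub hy.2)
        exact Finset.mem_filter.2 ⟨Finset.mem_univ _, h1.2, lt_of_le_of_ne le_top hy.1⟩
      · exact hch.mono (by simp [Finset.erase_subset])
    · intro e he
      rw [mem_chainsIn] at he
      obtain ⟨hsub, hch⟩ := he
      have hlt : ∀ y ∈ e, y < ⊤ := fun y hy => (Finset.mem_filter.1 (hsub hy)).2.2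
      rw [Finset.mem_filter, mem_chainsIn]
      refine ⟨⟨fun y hy => ?_, ?_⟩, Finset.mem_insert_self _ _⟩
      · rcases Finset.mem_insert.1 hy with rfl | hy
        · exact Finset.mem_filter.2 ⟨Finset.mem_univ _, (Ne.bot_lt (fun h => hbt h.symm))⟩
        · exact Finset.mem_filter.2 ⟨Finset.mem_univ _, (Finset.mem_filter.1 (hsub hy)).2.1⟩
      · rw [Finset.coe_insert]
        exact hch.insert (fun y hy _ => Or.inr le_top)
    · intro d hd
      rw [Finset.mem_filter] at hd
      exact Finset.insert_erase hd.2
    · intro e he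
      rw [mem_chainsIn] at he
      have htne : ⊤ ∉ e := fun h => absurd (Finset.mem_filter.1 (he.1 h)).2.2 (lt_irrefl ⊤)
      exact Finset.erase_insert htne
    · intro d hd
      rw [Finset.mem_filter, mem_chainsIn] at hd
      obtain ⟨⟨hsub, hch⟩, htopd⟩ := hd
      have hmax : ∀ y ∈ d, y ≤ ⊤ := fun y _ => le_top
      have htopOf : topOf d = ⊤ := topOf_eq htopd hmax
      have hcard : d.card = (d.erase ⊤).card + 1 := by
        rw [Finset.card_erase_of_mem htopd]
        have : 0 < d.card := Finset.card_pos.2 ⟨⊤, htopd⟩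
        omega
      rw [FF, dif_pos ⟨⊤, htopd⟩, htopOf, htop, hcard]
      rw [show n + 1 + ((d.erase ⊤).card + 1) = n + (d.erase ⊤).card + 2 by omega]
      rw [pow_add, pow_add]
      ring
end Z

section Z3
variable {P : Type*} [Fintype P] [PartialOrder P] [BoundedOrder P] (ρ : P → ℕ)


lemma chain_image_card (hstrict : ∀ x y : P, x < y → ρ x < ρ y) {d : Finset P}
    (hch : IsChain (· ≤ ·) (↑d : Set P)) : (d.image ρ).card = d.card := by
  rw [Finset.card_image_of_injOn]
  intro x hx y hy hxy
  by_contra hne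
  rcases hch hx hy hne with h | h
  · exact absurd hxy (Nat.ne_of_lt (hstrict _ _ (lt_of_le_of_ne h hne)))
  · exact absurd hxy.symm (Nat.ne_of_lt (hstrict _ _ (lt_of_le_of_ne h (Ne.symm hne))))

lemma chain_image_max (hstrict : ∀ x y : P, x < y → ρ x < ρ y) {d : Finset P}
    (hch : IsChain (· ≤ ·) (↑d : Set P)) (hne : d.Nonempty) :
    ρ (topOf d) = t0 (d.image ρ) := by
  obtain ⟨hmem, hmax⟩ := topOf_spec hch hne
  rw [t0, dif_pos (hne.image ρ)]
  refine le_antisymm (Finset.le_max' _ _ (Finset.mem_image_of_mem ρ hmem)) ?_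
  refine Finset.max'_le _ _ _ fun r hr => ?_
  obtain ⟨y, hy, rfl⟩ := Finset.mem_image.1 hr
  rcases eq_or_lt_of_le (hmax y hy) with rfl | h
  · exact le_rfl
  · exact (hstrict _ _ h).le

lemma group_by_image (A : Finset P) (G : Finset ℕ → ℤ) (B : Finset ℕ)
    (hA : ∀ d ∈ chainsIn A, d.image ρ ⊆ B) :
    ∑ d ∈ chainsIn A, G (d.image ρ)
      = ∑ T ∈ B.powerset,
          (((chainsIn A).filter (fun d => d.image ρ = T)).card : ℤ) * G T := by
  rw [← Finset.sum_fiberwise_of_maps_to (fun d hd => Finset.mem_powerset.2 (hA d hd))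
    (fun d => G (d.image ρ))]
  refine Finset.sum_congr rfl fun T _ => ?_
  trans ∑ _d ∈ (chainsIn A).filter (fun d => d.image ρ = T), G T
  · exact Finset.sum_congr rfl (fun d hd => by rw [(Finset.mem_filter.1 hd).2])
  · rw [Finset.sum_const, nsmul_eq_mul]

lemma flagF_eq {n : ℕ} (hbot : ρ ⊥ = 0) (htop : ρ ⊤ = n + 1)
    (hstrict : ∀ x y : P, x < y → ρ x < ρ y)
    {T : Finset ℕ} (hT : T ⊆ Finset.Icc 1 n) :
    flagF P ρ T =
      (((chainsIn (Finset.univ.filter fun y : P => ⊥ < y ∧ y < ⊤)).filter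
        (fun d => d.image ρ = T)).card : ℤ) := by
  rw [flagF]
  have hset : ({c : Finset P | IsChain (· ≤ ·) (↑c : Set P) ∧ c.image ρ = T} : Set (Finset P))
      = ↑((chainsIn (Finset.univ.filter fun y : P => ⊥ < y ∧ y < ⊤)).filter
          (fun d => d.image ρ = T)) := by
    ext c
    simp only [Set.mem_setOf_eq, Finset.coe_filter, mem_chainsIn]
    constructor
    · rintro ⟨hch, him⟩
      refine ⟨⟨fun y hy => ?_, hch⟩, him⟩
      have hρ : ρ y ∈ T := him ▸ Finset.mem_image_of_mem ρ hy
      have h1 := Finset.mem_Icc.1 (hT hρ)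
      refine Finset.mem_filter.2 ⟨Finset.mem_univ _, ?_, ?_⟩
      · refine Ne.bot_lt fun h => ?_
        rw [h, hbot] at h1; omega
      · refine lt_top_iff_ne_top.2 fun h => ?_
        rw [h, htop] at h1; omega
    · rintro ⟨⟨-, hch⟩, him⟩
      exact ⟨hch, him⟩
  rw [hset, Set.ncard_coe_finset]

lemma flagF_empty : flagF P ρ ∅ = 1 := by
  rw [flagF]
  have hset : ({c : Finset P | IsChain (· ≤ ·) (↑c : Set P) ∧ c.image ρ = ∅} : Set (Finset P))
      = {∅} := by
    ext c
    simp only [Set.mem_setOf_eq, Finset.image_eq_empty, Set.mem_singleton_iff]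
    constructor
    · rintro ⟨-, h⟩; exact h
    · rintro rfl; simp
  rw [hset, Set.ncard_singleton, Nat.cast_one]

lemma Zfinal {n : ℕ} (hbot : ρ ⊥ = 0) (htop : ρ ⊤ = n + 1)
    (hstrict : ∀ x y : P, x < y → ρ x < ρ y) :
    ∑ x : P, (-1 : ℤ) ^ (ρ x) * muP P ⊥ x
      = ∑ T ∈ (Finset.Icc 1 n).powerset,
          flagF P ρ T * ((-1) ^ (t0 T + T.card) + (-1) ^ (n + T.card)) := by
  rw [Z1 ρ hbot hstrict, Z2 ρ hbot htop hstrict]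
  set A₁ := Finset.univ.filter fun y : P => ⊥ < y ∧ y < ⊤ with hA₁
  have hmaps : ∀ d ∈ chainsIn A₁, d.image ρ ⊆ Finset.Icc 1 n := by
    intro d hd r hr
    obtain ⟨y, hy, rfl⟩ := Finset.mem_image.1 hr
    have h1 := Finset.mem_filter.1 ((mem_chainsIn.1 hd).1 hy)
    rw [Finset.mem_Icc]
    have h2 := hstrict _ _ h1.2.1
    have h3 := hstrict _ _ h1.2.2
    rw [hbot] at h2; rw [htop] at h3
    omega
  have e1 : ∑ d ∈ chainsIn A₁, FF ρ d
      = ∑ d ∈ chainsIn A₁,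
          (fun T => if T.Nonempty then (-1 : ℤ) ^ (t0 T + T.card) else 0) (d.image ρ) := by
    refine Finset.sum_congr rfl fun d hd => ?_
    have hch := (mem_chainsIn.1 hd).2
    rcases Finset.eq_empty_or_nonempty d with rfl | hne
    · simp [FF]
    · dsimp only
      rw [FF, dif_pos hne, if_pos (hne.image ρ), chain_image_max ρ hstrict hch hne,
        chain_image_card ρ hstrict hch]
  have e2 : ∑ e ∈ chainsIn A₁, (-1 : ℤ) ^ (n + e.card)
      = ∑ e ∈ chainsIn A₁,
          (fun T => (-1 : ℤ) ^ (n + T.card)) (e.image ρ) := by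
    refine Finset.sum_congr rfl fun d hd => ?_
    dsimp only
    rw [chain_image_card ρ hstrict (mem_chainsIn.1 hd).2]
  rw [e1, e2,
    group_by_image ρ A₁ (fun T => if T.Nonempty then (-1 : ℤ) ^ (t0 T + T.card) else 0)
      (Finset.Icc 1 n) hmaps,
    group_by_image ρ A₁ (fun T => (-1 : ℤ) ^ (n + T.card)) (Finset.Icc 1 n) hmaps]
  have ecnt : ∀ T ∈ (Finset.Icc 1 n).powerset,
      (((chainsIn A₁).filter (fun d => d.image ρ = T)).card : ℤ) = flagF P ρ T := by
    intro T hT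
    exact (flagF_eq ρ hbot htop hstrict (Finset.mem_powerset.1 hT)).symm
  have ecnt1 : ∑ T ∈ (Finset.Icc 1 n).powerset,
      (((chainsIn A₁).filter (fun d => d.image ρ = T)).card : ℤ)
        * (if T.Nonempty then (-1 : ℤ) ^ (t0 T + T.card) else 0)
      = ∑ T ∈ (Finset.Icc 1 n).powerset,
        flagF P ρ T * (if T.Nonempty then (-1 : ℤ) ^ (t0 T + T.card) else 0) :=
    Finset.sum_congr rfl fun T hT => by rw [ecnt T hT]
  have ecnt2 : ∑ T ∈ (Finset.Icc 1 n).powerset,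
      (((chainsIn A₁).filter (fun d => d.image ρ = T)).card : ℤ) * (-1 : ℤ) ^ (n + T.card)
      = ∑ T ∈ (Finset.Icc 1 n).powerset, flagF P ρ T * (-1 : ℤ) ^ (n + T.card) :=
    Finset.sum_congr rfl fun T hT => by rw [ecnt T hT]
  rw [ecnt1, ecnt2]
  simp only [mul_add]
  rw [Finset.sum_add_distrib]
  have key : ∑ T ∈ (Finset.Icc 1 n).powerset,
      (flagF P ρ T * (-1 : ℤ) ^ (t0 T + T.card)
        - flagF P ρ T * (if T.Nonempty then (-1 : ℤ) ^ (t0 T + T.card) else 0)) = 1 := by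
    rw [Finset.sum_eq_single_of_mem ∅ (by simp)]
    · simp [flagF_empty, t0]
    · intro T hT hTne
      rw [if_pos (Finset.nonempty_iff_ne_empty.2 hTne)]
      ring
  linarith [key, Finset.sum_sub_distrib (s := (Finset.Icc 1 n).powerset)
    (f := fun T => flagF P ρ T * (-1 : ℤ) ^ (t0 T + T.card))
    (g := fun T => flagF P ρ T * (if T.Nonempty then (-1 : ℤ) ^ (t0 T + T.card) else 0))]
end Z3
lemma parity_sum : ∀ n t : ℕ, t ≤ n → 2 * ∑ m ∈ Finset.Icc t n, (-1 : ℤ) ^ m = (-1) ^ t + (-1) ^ n := by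
  intro n
  induction n with
  | zero => intro t ht; interval_cases t; simp
  | succ n ih =>
    intro t ht
    rcases Nat.lt_or_ge n t with h | h
    · have : t = n + 1 := by omega
      subst this
      rw [Finset.Icc_self, Finset.sum_singleton]
      ring
    · rw [Finset.sum_Icc_succ_top (by omega), mul_add, ih t h, pow_succ]
      ring

lemma t0_le {T : Finset ℕ} {n : ℕ} (hT : T ⊆ Finset.Icc 1 n) : t0 T ≤ n := by
  rw [t0]
  split
  · next h => exact (Finset.mem_Icc.1 (hT (T.max'_mem h))).2
  · omega

lemma subset_iff_t0 {T : Finset ℕ} {n : ℕ} (hT : T ⊆ Finset.Icc 1 n) (m : ℕ) :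
    T ⊆ Finset.Icc 1 m ↔ t0 T ≤ m := by
  rw [t0]
  split
  · next h =>
    constructor
    · intro hs
      exact (Finset.mem_Icc.1 (hs (T.max'_mem h))).2
    · intro hm j hj
      have h1 := (Finset.mem_Icc.1 (hT hj)).1
      have h2 := Finset.le_max' T j hj
      exact Finset.mem_Icc.2 ⟨h1, by omega⟩
  · next h =>
    have : T = ∅ := Finset.not_nonempty_iff_eq_empty.1 h
    subst this
    simp

lemma card_le_t0 {T : Finset ℕ} {n : ℕ} (hT : T ⊆ Finset.Icc 1 n) : T.card ≤ t0 T := by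
  have h := (subset_iff_t0 hT (t0 T)).2 le_rfl
  have := Finset.card_le_card h
  rwa [Nat.card_Icc, Nat.add_sub_cancel] at this

lemma neg_one_pow_sub {m t : ℕ} (h : t ≤ m) : (-1 : ℤ) ^ (m - t) = (-1) ^ m * (-1) ^ t := by
  calc (-1 : ℤ) ^ (m - t) = (-1) ^ (m - t) * ((-1) ^ 2) ^ t := by norm_num
  _ = (-1) ^ (m - t + 2 * t) := by rw [← pow_mul, ← pow_add]
  _ = (-1) ^ (m + t) := by rw [show m - t + 2 * t = m + t by omega]
  _ = (-1) ^ m * (-1) ^ t := pow_add _ _ _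

lemma hside (P : Type*) [PartialOrder P] (ρ : P → ℕ) (n : ℕ) :
    ∑ m ∈ Finset.range (n + 1), 2 * flagH P ρ (Finset.Icc 1 m)
      = ∑ T ∈ (Finset.Icc 1 n).powerset,
          flagF P ρ T * ((-1) ^ (t0 T + T.card) + (-1) ^ (n + T.card)) := by
  have step1 : ∀ m ∈ Finset.range (n + 1),
      2 * flagH P ρ (Finset.Icc 1 m)
        = ∑ T ∈ (Finset.Icc 1 n).powerset,
            (if T ⊆ Finset.Icc 1 m then 2 * ((-1 : ℤ) ^ (m - T.card) * flagF P ρ T) else 0) := by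
    intro m hm
    rw [Finset.mem_range] at hm
    rw [flagH]
    have hpc : (Finset.Icc 1 m).card = m := by rw [Nat.card_Icc]; omega
    have hps : (Finset.Icc 1 m).powerset
        = (Finset.Icc 1 n).powerset.filter (· ⊆ Finset.Icc 1 m) := by
      ext T
      simp only [Finset.mem_powerset, Finset.mem_filter]
      constructor
      · intro h
        exact ⟨h.trans (Finset.Icc_subset_Icc le_rfl (by omega)), h⟩
      · exact fun h => h.2
    rw [hpc, hps, Finset.sum_filter, Finset.mul_sum]
    refine Finset.sum_congr rfl fun T hT => ?_
    split <;> ring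
  rw [Finset.sum_congr rfl step1, Finset.sum_comm]
  refine Finset.sum_congr rfl fun T hT => ?_
  have hTn := Finset.mem_powerset.1 hT
  have e : (Finset.range (n + 1)).filter (fun m => T ⊆ Finset.Icc 1 m)
      = Finset.Icc (t0 T) n := by
    ext m
    rw [Finset.mem_filter, Finset.mem_range, Finset.mem_Icc, subset_iff_t0 hTn m]
    omega
  rw [← Finset.sum_filter, e]
  have hc : T.card ≤ t0 T := card_le_t0 hTn
  have e2 : ∀ m ∈ Finset.Icc (t0 T) n,
      2 * ((-1 : ℤ) ^ (m - T.card) * flagF P ρ T)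
        = (2 * (-1 : ℤ) ^ m) * ((-1) ^ T.card * flagF P ρ T) := by
    intro m hm
    rw [neg_one_pow_sub (le_trans hc (Finset.mem_Icc.1 hm).1)]
    ring
  rw [Finset.sum_congr rfl e2, ← Finset.sum_mul, ← Finset.mul_sum,
    parity_sum n (t0 T) (t0_le hTn), pow_add, pow_add]
  ring

/-- For a graded poset `P`, `η(Ψ(P)) = Z(P) ⬝ (a-b)^{ρ(P)-1}`, where
`Z(P) = ∑_{x ∈ P} (-1)^{ρ(x)} μ(0̂,x)`. -/
theorem eta_Psi (n : ℕ) (P : Type*) [Fintype P] [PartialOrder P]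
    [BoundedOrder P] (ρ : P → ℕ)
    (hbot : ρ ⊥ = 0) (htop : ρ ⊤ = n + 1)
    (hstrict : ∀ x y : P, x < y → ρ x < ρ y)
    (hcov : ∀ x y : P, x ⋖ y → ρ y = ρ x + 1) :
    extendMon etaMon (Psi P ρ n) =
      (∑ x : P, (-1) ^ (ρ x) * muP P (⊥ : P) x) • (aV - bV) ^ n := by
  rw [partI P ρ n]
  congr 1
  rw [hside P ρ n, Zfinal ρ hbot htop hstrict]
end

section
/- For a graded poset P of rank at least 2, H'(\Psi(P)) = \sum_{x \text{ coatom of } P} \Psi([\hat{0}, x]), where H' is the linear operator on Z\langle a,b\rangle deleting the last letter of each monomial (with H'(1)=0). -/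
open Finset

open scoped Classical

/-- The operator `H'` deleting the last letter of each `ab`-monomial. -/
noncomputable def HMon (l : List Bool) : AB :=
  if l = [] then 0 else MonoidAlgebra.single (FreeMonoid.ofList l.dropLast) 1

/-! ### Auxiliary lemmas -/

section Aux

noncomputable def Lmap (g : List Bool → AB) : AB →ₗ[ℤ] AB :=
  Finsupp.lsum ℤ (fun m => LinearMap.toSpanSingleton ℤ AB (g (FreeMonoid.toList m)))
    ∘ₗ (MonoidAlgebra.coeffLinearEquiv ℤ).toLinearMap

lemma extendMon_eq_Lmap (g : List Bool → AB) : extendMon g = ⇑(Lmap g) := by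
  funext w
  simp only [extendMon, Lmap, LinearMap.coe_comp, Function.comp_apply, LinearEquiv.coe_coe,
    MonoidAlgebra.coeffLinearEquiv_apply, Finsupp.lsum_apply, LinearMap.toSpanSingleton_apply]
  rfl

lemma word_toList (n : ℕ) (S : Finset ℕ) :
    FreeMonoid.toList (word n S) = List.ofFn fun i : Fin n => decide ((i : ℕ) + 1 ∈ S) := rfl

lemma HMon_word_succ (m : ℕ) (S : Finset ℕ) :
    HMon (FreeMonoid.toList (word (m + 1) S)) = MonoidAlgebra.single (word m S) 1 := by
  rw [word_toList, HMon]
  rw [if_neg (by simp [List.ofFn_eq_nil_iff] )]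
  congr 1
  rw [List.ofFn_succ', List.concat_eq_append, List.dropLast_concat]
  rfl

end Aux

lemma word_insert_high (m k : ℕ) (S : Finset ℕ) (hk : m < k) :
    word m (insert k S) = word m S := by
  have h : (fun i : Fin m => decide ((i : ℕ) + 1 ∈ insert k S))
      = fun i : Fin m => decide ((i : ℕ) + 1 ∈ S) := by
    funext i
    have hik : (i : ℕ) + 1 ∈ insert k S ↔ (i : ℕ) + 1 ∈ S := by
      rw [Finset.mem_insert]
      have := i.2
      exact ⟨fun h => h.elim (fun h => absurd h (by omega)) id, Or.inr⟩
    simp [hik]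
  unfold word
  rw [h]


lemma flagF_card (P : Type*) [PartialOrder P] [Fintype P] (ρ : P → ℕ) (S : Finset ℕ) :
    flagF P ρ S = ((univ.filter fun c : Finset P =>
      IsChain (· ≤ ·) (↑c : Set P) ∧ c.image ρ = S).card : ℤ) := by
  have h : {c : Finset P | IsChain (· ≤ ·) (↑c : Set P) ∧ c.image ρ = S}
      = ↑(univ.filter fun c : Finset P => IsChain (· ≤ ·) (↑c : Set P) ∧ c.image ρ = S) := by
    ext c; simp
  rw [flagF, h, Set.ncard_coe_finset]

section Main
variable {P : Type*} [Fintype P] [PartialOrder P] [BoundedOrder P] {ρ : P → ℕ} {n : ℕ}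

lemma chain_rank_inj (hstrict : ∀ x y : P, x < y → ρ x < ρ y) {c : Finset P}
    (hc : IsChain (· ≤ ·) (↑c : Set P)) {y z : P} (hy : y ∈ c) (hz : z ∈ c)
    (h : ρ y = ρ z) : y = z := by
  by_contra hne
  rcases hc (Finset.mem_coe.2 hy) (Finset.mem_coe.2 hz) hne with h1 | h1
  · have := hstrict y z (lt_of_le_of_ne h1 hne); omega
  · have := hstrict z y (lt_of_le_of_ne h1 (Ne.symm hne)); omega

lemma coatom_iff (htop : ρ ⊤ = n + 1) (hstrict : ∀ x y : P, x < y → ρ x < ρ y)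
    (hcov : ∀ x y : P, x ⋖ y → ρ y = ρ x + 1) (x : P) : x ⋖ ⊤ ↔ ρ x = n := by
  constructor
  · intro h; have := hcov x ⊤ h; omega
  · intro h
    have hxt : x < ⊤ := lt_of_le_of_ne le_top (by intro he; rw [he] at h; omega)
    exact ⟨hxt, fun z h1 h2 => by
      have := hstrict x z h1; have h3 := hstrict z ⊤ h2; rw [htop] at h3; omega⟩

/-- The key flag `f`-vector identity. -/
lemma flagF_insert (htop : ρ ⊤ = n + 1) (hstrict : ∀ x y : P, x < y → ρ x < ρ y)
    (hcov : ∀ x y : P, x ⋖ y → ρ y = ρ x + 1) {U : Finset ℕ} (hU : ∀ j ∈ U, j < n) :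
    flagF P ρ (insert n U) = ∑ x ∈ univ.filter (fun x : P => x ⋖ ⊤),
      flagF {y : P // y ≤ x} (fun y => ρ y.1) U := by
  have hnU : n ∉ U := fun h => lt_irrefl n (hU n h)
  rw [flagF_card]
  simp_rw [flagF_card]
  rw [← Nat.cast_sum]
  congr 1
  -- the fiber map
  set A := univ.filter fun c : Finset P =>
      IsChain (· ≤ ·) (↑c : Set P) ∧ c.image ρ = insert n U with hA
  set f : Finset P → P := fun c => if h : ∃ y ∈ c, ρ y = n then h.choose else ⊤ with hf
  have hfmem : ∀ c ∈ A, f c ∈ c ∧ ρ (f c) = n := by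
    intro c hc
    rw [hA, mem_filter] at hc
    have hex : ∃ y ∈ c, ρ y = n := by
      have : n ∈ c.image ρ := by rw [hc.2.2]; exact mem_insert_self _ _
      exact Finset.mem_image.1 this
    rw [hf]; simp only [dif_pos hex]
    exact hex.choose_spec
  have hfcoatom : ∀ c ∈ A, f c ∈ univ.filter (fun x : P => x ⋖ ⊤) := by
    intro c hc
    simp only [mem_filter, mem_univ, true_and]
    exact (coatom_iff htop hstrict hcov _).2 (hfmem c hc).2
  rw [Finset.card_eq_sum_card_fiberwise hfcoatom]
  refine Finset.sum_congr rfl fun x hx => ?_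
  rw [mem_filter] at hx
  have hxrank : ρ x = n := (coatom_iff htop hstrict hcov x).1 hx.2
  -- f c = x ↔ x ∈ c for c ∈ A
  have hfx : ∀ c ∈ A, (f c = x ↔ x ∈ c) := by
    intro c hc
    rw [hA, mem_filter] at hc
    constructor
    · intro h; rw [← h]; exact (hfmem c (by rw [hA, mem_filter]; exact hc)).1
    · intro h
      have h1 := hfmem c (by rw [hA, mem_filter]; exact hc)
      exact chain_rank_inj hstrict hc.2.1 h1.1 h (by rw [h1.2, hxrank])
  -- bijection with chains in the lower interval
  refine Finset.card_bij'
    (fun c _ => (c.erase x).subtype (· ≤ x))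
    (fun c' _ => insert x (c'.image Subtype.val)) ?_ ?_ ?_ ?_
  · -- forward map lands in the target
    intro c hc
    rw [mem_filter] at hc
    obtain ⟨hcA, hfc⟩ := hc
    have hcA' := hcA
    rw [hA, mem_filter] at hcA'
    obtain ⟨-, hchain, himg⟩ := hcA'
    have hxc : x ∈ c := (hfx c hcA).1 hfc
    have hle : ∀ y ∈ c, y ≤ x := by
      intro y hy
      by_cases hyx : y = x
      · exact hyx.le
      rcases hchain (Finset.mem_coe.2 hy) (Finset.mem_coe.2 hxc) hyx with h1 | h1
      · exact h1
      · -- x ≤ y, so ρ x ≤ ρ y, but ρ y ∈ insert n U and ρ y ≠ n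
        rcases lt_or_eq_of_le h1 with h2 | h2
        · have h3 := hstrict x y h2
          have : ρ y ∈ insert n U := by rw [← himg]; exact Finset.mem_image_of_mem ρ hy
          rcases Finset.mem_insert.1 this with h4 | h4
          · exact absurd (chain_rank_inj hstrict hchain hy hxc (by omega)) hyx
          · have := hU _ h4; omega
        · exact h2.ge
    simp only [mem_filter, mem_univ, true_and]
    constructor
    · -- chain
      intro y hy z hz hne
      simp only [Set.mem_setOf_eq, Finset.mem_coe, Finset.mem_subtype] at hy hz
      have := hchain (Finset.mem_coe.2 (Finset.mem_of_mem_erase hy))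
        (Finset.mem_coe.2 (Finset.mem_of_mem_erase hz))
        (fun h => hne (Subtype.ext h))
      exact this.imp (fun h => h) (fun h => h)
    · -- image equality
      have hsub : ((c.erase x).subtype (· ≤ x)).image Subtype.val = c.erase x := by
        ext y
        simp only [Finset.mem_image, Finset.mem_subtype]
        constructor
        · rintro ⟨⟨z, hz⟩, h1, rfl⟩; exact h1
        · intro hy; exact ⟨⟨y, hle y (Finset.mem_of_mem_erase hy)⟩, hy, rfl⟩
      have him : ∀ s : Finset {y : P // y ≤ x},
          s.image (fun y => ρ y.1) = (s.image Subtype.val).image ρ := by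
        intro s; rw [Finset.image_image]; rfl
      rw [him, hsub]
      -- image ρ (c.erase x) = U
      ext k
      simp only [Finset.mem_image]
      constructor
      · rintro ⟨y, hy, rfl⟩
        have h1 : ρ y ∈ insert n U := by
          rw [← himg]; exact Finset.mem_image_of_mem ρ (Finset.mem_of_mem_erase hy)
        rcases Finset.mem_insert.1 h1 with h2 | h2
        · exact absurd (chain_rank_inj hstrict hchain (Finset.mem_of_mem_erase hy) hxc
            (by omega)) (Finset.ne_of_mem_erase hy)
        · exact h2
      · intro hk
        have : k ∈ c.image ρ := by rw [himg]; exact Finset.mem_insert_of_mem hk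
        obtain ⟨y, hy, rfl⟩ := Finset.mem_image.1 this
        refine ⟨y, Finset.mem_erase.2 ⟨?_, hy⟩, rfl⟩
        intro he; rw [he, hxrank] at hk; exact hnU hk
  · -- backward map lands in the source
    intro c' hc'
    rw [mem_filter] at hc'
    obtain ⟨-, hchain', himg'⟩ := hc'
    have hxim : x ∉ c'.image Subtype.val := by
      intro h
      obtain ⟨z, hz1, hz2⟩ := Finset.mem_image.1 h
      have h3 : ρ (z : P) ∈ U := by rw [← himg']; exact Finset.mem_image_of_mem _ hz1
      rw [hz2, hxrank] at h3
      exact hnU h3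
    have hleall : ∀ y ∈ c'.image Subtype.val, y ≤ x := by
      rintro y hy
      obtain ⟨⟨z, hz⟩, _, rfl⟩ := Finset.mem_image.1 hy
      exact hz
    have hchain2 : IsChain (· ≤ ·) (↑(insert x (c'.image Subtype.val)) : Set P) := by
      intro y hy z hz hne
      simp only [Finset.coe_insert, Set.mem_insert_iff, Finset.mem_coe] at hy hz
      rcases hy with rfl | hy
      · rcases hz with rfl | hz
        · exact absurd rfl hne
        · exact Or.inr (hleall z hz)
      · rcases hz with rfl | hz
        · exact Or.inl (hleall y hy)
        · obtain ⟨⟨y', hy'⟩, hy1, rfl⟩ := Finset.mem_image.1 hy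
          obtain ⟨⟨z', hz'⟩, hz1, rfl⟩ := Finset.mem_image.1 hz
          have := hchain' (Finset.mem_coe.2 hy1) (Finset.mem_coe.2 hz1)
            (fun h => hne (congrArg Subtype.val h))
          exact this.imp (fun h => h) (fun h => h)
    have himg2 : (insert x (c'.image Subtype.val)).image ρ = insert n U := by
      rw [Finset.image_insert, hxrank]
      congr 1
      rw [Finset.image_image, ← himg']
      rfl
    have hmemA : insert x (c'.image Subtype.val) ∈ A := by
      rw [hA, mem_filter]
      exact ⟨mem_univ _, hchain2, himg2⟩
    rw [mem_filter]
    exact ⟨hmemA, (hfx _ hmemA).2 (Finset.mem_insert_self _ _)⟩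
  · -- left inverse
    intro c hc
    rw [mem_filter] at hc
    obtain ⟨hcA, hfc⟩ := hc
    have hcA' := hcA
    rw [hA, mem_filter] at hcA'
    obtain ⟨-, hchain, himg⟩ := hcA'
    have hxc : x ∈ c := (hfx c hcA).1 hfc
    have hle : ∀ y ∈ c.erase x, y ≤ x := by
      intro y hy
      have hy' := Finset.mem_of_mem_erase hy
      by_cases hyx : y = x
      · exact hyx.le
      rcases hchain (Finset.mem_coe.2 hy') (Finset.mem_coe.2 hxc) hyx with h1 | h1
      · exact h1
      · rcases lt_or_eq_of_le h1 with h2 | h2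
        · have h3 := hstrict x y h2
          have : ρ y ∈ insert n U := by rw [← himg]; exact Finset.mem_image_of_mem ρ hy'
          rcases Finset.mem_insert.1 this with h4 | h4
          · exact absurd (chain_rank_inj hstrict hchain hy' hxc (by omega)) hyx
          · have := hU _ h4; omega
        · exact h2.ge
    have hsub : ((c.erase x).subtype (· ≤ x)).image Subtype.val = c.erase x := by
      ext y
      simp only [Finset.mem_image, Finset.mem_subtype]
      constructor
      · rintro ⟨⟨z, hz⟩, h1, rfl⟩; exact h1
      · intro hy; exact ⟨⟨y, hle y hy⟩, hy, rfl⟩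
    rw [hsub, Finset.insert_erase hxc]
  · -- right inverse
    intro c' hc'
    rw [mem_filter] at hc'
    obtain ⟨-, hchain', himg'⟩ := hc'
    have hxim : x ∉ c'.image Subtype.val := by
      intro h
      obtain ⟨z, hz1, hz2⟩ := Finset.mem_image.1 h
      have h3 : ρ (z : P) ∈ U := by rw [← himg']; exact Finset.mem_image_of_mem _ hz1
      rw [hz2, hxrank] at h3
      exact hnU h3
    rw [Finset.erase_insert hxim]
    ext ⟨y, hy⟩
    simp only [Finset.mem_subtype, Finset.mem_image]
    constructor
    · rintro ⟨⟨z, hz⟩, hz1, h⟩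
      cases h
      exact hz1
    · intro h
      exact ⟨⟨y, hy⟩, h, rfl⟩

end Main

section Main2
variable {P : Type*} [Fintype P] [PartialOrder P] [BoundedOrder P] {ρ : P → ℕ} {n : ℕ}

lemma flagH_add_insert (P' : Type*) [PartialOrder P'] (ρ' : P' → ℕ) {T : Finset ℕ} {k : ℕ}
    (hk : k ∉ T) :
    flagH P' ρ' T + flagH P' ρ' (insert k T) =
      ∑ U ∈ T.powerset, (-1 : ℤ) ^ (T.card - U.card) * flagF P' ρ' (insert k U) := by
  unfold flagH
  rw [Finset.sum_powerset_insert hk, card_insert_of_notMem hk]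
  have h1 : ∑ U ∈ T.powerset, (-1 : ℤ) ^ (T.card + 1 - U.card) * flagF P' ρ' U
      = -∑ U ∈ T.powerset, (-1 : ℤ) ^ (T.card - U.card) * flagF P' ρ' U := by
    rw [← Finset.sum_neg_distrib]
    refine Finset.sum_congr rfl fun U hU => ?_
    have hle : U.card ≤ T.card := card_le_card (mem_powerset.1 hU)
    have he : T.card + 1 - U.card = (T.card - U.card) + 1 := by omega
    rw [he, pow_succ]; ring
  have h2 : ∑ U ∈ T.powerset, (-1 : ℤ) ^ (T.card + 1 - (insert k U).card) * flagF P' ρ' (insert k U)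
      = ∑ U ∈ T.powerset, (-1 : ℤ) ^ (T.card - U.card) * flagF P' ρ' (insert k U) := by
    refine Finset.sum_congr rfl fun U hU => ?_
    have hkU : k ∉ U := fun h => hk (mem_powerset.1 hU h)
    rw [card_insert_of_notMem hkU]
    congr 2
    omega
  rw [h1, h2]
  ring

lemma flagH_key (htop : ρ ⊤ = n + 1) (hstrict : ∀ x y : P, x < y → ρ x < ρ y)
    (hcov : ∀ x y : P, x ⋖ y → ρ y = ρ x + 1) {T : Finset ℕ} (hT : ∀ j ∈ T, j < n) :
    flagH P ρ T + flagH P ρ (insert n T) =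
      ∑ x ∈ univ.filter (fun x : P => x ⋖ ⊤), flagH {y : P // y ≤ x} (fun y => ρ y.1) T := by
  rw [flagH_add_insert P ρ (fun h => lt_irrefl n (hT n h))]
  have h1 : ∀ U ∈ T.powerset, (-1 : ℤ) ^ (T.card - U.card) * flagF P ρ (insert n U)
      = ∑ x ∈ univ.filter (fun x : P => x ⋖ ⊤),
          (-1 : ℤ) ^ (T.card - U.card) * flagF {y : P // y ≤ x} (fun y => ρ y.1) U := by
    intro U hU
    rw [flagF_insert htop hstrict hcov (fun j hj => hT j (mem_powerset.1 hU hj)), Finset.mul_sum]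
  rw [Finset.sum_congr rfl h1, Finset.sum_comm]
  rfl

end Main2

/-- For a graded poset `P` of rank at least 2,
`H'(Ψ(P)) = ∑_{x coatom of P} Ψ([0̂,x])`. -/
theorem Hprime_Psi (n : ℕ) (P : Type*) [Fintype P] [PartialOrder P]
    [BoundedOrder P] (ρ : P → ℕ)
    (hbot : ρ ⊥ = 0) (htop : ρ ⊤ = n + 1) (hn : 1 ≤ n)
    (hstrict : ∀ x y : P, x < y → ρ x < ρ y)
    (hcov : ∀ x y : P, x ⋖ y → ρ y = ρ x + 1) :
    extendMon HMon (Psi P ρ n) =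
      ∑ x ∈ Finset.univ.filter (fun x : P => x ⋖ ⊤),
        Psi {y : P // y ≤ x} (fun y => ρ y.1) (n - 1) := by
  classical
  obtain ⟨m, rfl⟩ : ∃ m, n = m + 1 := ⟨n - 1, by omega⟩
  simp only [Nat.add_sub_cancel]
  rw [Psi, extendMon_eq_Lmap, map_sum]
  have hterm : ∀ S : Finset ℕ,
      Lmap HMon (MonoidAlgebra.single (word (m + 1) S) (flagH P ρ S))
        = MonoidAlgebra.single (word m S) (flagH P ρ S) := by
    intro S
    rw [← congrFun (extendMon_eq_Lmap HMon), extendMon_single, HMon_word_succ]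
    simp [MonoidAlgebra.smul_single']
  rw [Finset.sum_congr rfl fun S _ => hterm S]
  have hicc : Finset.Icc 1 (m + 1) = insert (m + 1) (Finset.Icc 1 m) := by
    ext j; simp only [Finset.mem_Icc, Finset.mem_insert]; omega
  rw [hicc, Finset.sum_powerset_insert (by simp)]
  have hcomb : ∀ T ∈ (Finset.Icc 1 m).powerset,
      MonoidAlgebra.single (word m T) (flagH P ρ T)
        + MonoidAlgebra.single (word m (insert (m + 1) T)) (flagH P ρ (insert (m + 1) T))
      = ∑ x ∈ Finset.univ.filter (fun x : P => x ⋖ ⊤),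
          MonoidAlgebra.single (word m T) (flagH {y : P // y ≤ x} (fun y => ρ y.1) T) := by
    intro T hT
    rw [word_insert_high m (m + 1) T (by omega), ← MonoidAlgebra.single_add,
      flagH_key htop hstrict hcov (fun j hj => by
        have := Finset.mem_Icc.1 (Finset.mem_powerset.1 hT hj); omega)]
    exact map_sum (MonoidAlgebra.singleAddHom (word m T)) _ _
  rw [← Finset.sum_add_distrib, Finset.sum_congr rfl hcomb, Finset.sum_comm]
  rfl
end
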